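/- Let u, v, w ∈ ℝ^N, φ_{abc} = u_a·v_b·w_c, D = λ_d + λ_p·N·(α₁+α₂+α₃) + λ_t·N^{3/2} with D ≠ 0, and assume |u|²·|v|²·|w|² = −λ₂·N³/D. Then for any u', v', w' ∈ ℝ^N with ⟨u',u⟩ = 0, ⟨v',v⟩ = 0, ⟨w',w⟩ = 0: H(φ)(u'⊗v'⊗w') = λ₂·(λ_p·N·(α₁+α₂+α₃) + λ_t·N^{3/2})/D · (u'⊗v'⊗w'). -/

import Mathlib

open Finset

/-- The potential of the quartic `O(N)^3` tensor model. -/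
noncomputable def potV (N : ℕ) (l2 ld lp lt a1 a2 a3 : ℝ)
    (φ : Fin N → Fin N → Fin N → ℝ) : ℝ :=
  l2 / 2 * (∑ a, ∑ b, ∑ c, (φ a b c) ^ 2)
  + ld / (4 * (N : ℝ) ^ 3) * (∑ a, ∑ b, ∑ c, (φ a b c) ^ 2) ^ 2
  + lp / (4 * (N : ℝ) ^ 2) *
      (a1 * ∑ a, ∑ b, ∑ c, ∑ a', ∑ b', ∑ c',
          φ a b c * φ a b' c' * φ a' b' c' * φ a' b c
       + a2 * ∑ a, ∑ b, ∑ c, ∑ a', ∑ b', ∑ c',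
          φ a b c * φ a' b c' * φ a' b' c' * φ a b' c
       + a3 * ∑ a, ∑ b, ∑ c, ∑ a', ∑ b', ∑ c',
          φ a b c * φ a' b' c * φ a' b' c' * φ a b c')
  + lt / (4 * (N : ℝ) ^ ((3 : ℝ) / 2)) *
      ∑ a, ∑ b, ∑ c, ∑ a', ∑ b', ∑ c',
        φ a b c * φ a b' c' * φ a' b c' * φ a' b' c

/-- The field equations of the quartic `O(N)^3` tensor model (vanishing gradient of `potV`). -/
def FieldEqs (N : ℕ) (l2 ld lp lt a1 a2 a3 : ℝ)
    (φ : Fin N → Fin N → Fin N → ℝ) : Prop :=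
  ∀ a b c,
    l2 * φ a b c
    + ld / (N : ℝ) ^ 3 * (∑ a', ∑ b', ∑ c', (φ a' b' c') ^ 2) * φ a b c
    + lp / (N : ℝ) ^ 2 *
        (a1 * ∑ a', ∑ b', ∑ c', φ a b' c' * φ a' b' c' * φ a' b c
         + a2 * ∑ a', ∑ b', ∑ c', φ a' b c' * φ a' b' c' * φ a b' c
         + a3 * ∑ a', ∑ b', ∑ c', φ a' b' c * φ a' b' c' * φ a b c')
    + lt / (N : ℝ) ^ ((3 : ℝ) / 2) *
        ∑ a', ∑ b', ∑ c', φ a b' c' * φ a' b c' * φ a' b' c = 0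

/-- The Hessian of `potV` at `φ` (the matrix of second partial derivatives
`H(φ)_{abc,a'b'c'} = ∂²V/∂φ_{abc}∂φ_{a'b'c'}`), acting on a tensor field `χ` by
`(H(φ)χ)_{abc} = Σ_{a'b'c'} H(φ)_{abc,a'b'c'} χ_{a'b'c'}`. -/
noncomputable def hessApply (N : ℕ) (l2 ld lp lt a1 a2 a3 : ℝ)
    (φ χ : Fin N → Fin N → Fin N → ℝ) : Fin N → Fin N → Fin N → ℝ :=
  fun a b c =>
    deriv (fun s : ℝ =>
      deriv (fun t : ℝ =>
        potV N l2 ld lp lt a1 a2 a3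
          (fun a' b' c' => φ a' b' c' + t * χ a' b' c'
            + s * (if a' = a ∧ b' = b ∧ c' = c then (1 : ℝ) else 0))) 0) 0

/- ===== auxiliary machinery ===== -/

def qip {N : ℕ} (f g : Fin N → ℝ) : ℝ := ∑ i, f i * g i

def dlt {N : ℕ} (a : Fin N) : Fin N → ℝ := fun j => if j = a then 1 else 0

def qS (N : ℕ) (f g : Fin N → Fin N → Fin N → ℝ) : ℝ :=
  ∑ a, ∑ b, ∑ c, f a b c * g a b c

def qQ1 (N : ℕ) (f1 f2 f3 f4 : Fin N → Fin N → Fin N → ℝ) : ℝ :=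
  ∑ a, ∑ b, ∑ c, ∑ a', ∑ b', ∑ c', f1 a b c * f2 a b' c' * f3 a' b' c' * f4 a' b c

def qQ2 (N : ℕ) (f1 f2 f3 f4 : Fin N → Fin N → Fin N → ℝ) : ℝ :=
  ∑ a, ∑ b, ∑ c, ∑ a', ∑ b', ∑ c', f1 a b c * f2 a' b c' * f3 a' b' c' * f4 a b' c

def qQ3 (N : ℕ) (f1 f2 f3 f4 : Fin N → Fin N → Fin N → ℝ) : ℝ :=
  ∑ a, ∑ b, ∑ c, ∑ a', ∑ b', ∑ c', f1 a b c * f2 a' b' c * f3 a' b' c' * f4 a b c'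

def qQ4 (N : ℕ) (f1 f2 f3 f4 : Fin N → Fin N → Fin N → ℝ) : ℝ :=
  ∑ a, ∑ b, ∑ c, ∑ a', ∑ b', ∑ c', f1 a b c * f2 a b' c' * f3 a' b c' * f4 a' b' c

lemma sum3_add {N : ℕ} (f g : Fin N → Fin N → Fin N → ℝ) :
    (∑ a, ∑ b, ∑ c, (f a b c + g a b c))
      = (∑ a, ∑ b, ∑ c, f a b c) + (∑ a, ∑ b, ∑ c, g a b c) := by
  simp [Finset.sum_add_distrib]

lemma sum3_mul {N : ℕ} (r : ℝ) (f : Fin N → Fin N → Fin N → ℝ) :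
    (∑ a, ∑ b, ∑ c, r * f a b c) = r * ∑ a, ∑ b, ∑ c, f a b c := by
  simp [Finset.mul_sum]

lemma sum3_congr {N : ℕ} {f g : Fin N → Fin N → Fin N → ℝ}
    (h : ∀ a b c, f a b c = g a b c) :
    (∑ a, ∑ b, ∑ c, f a b c) = ∑ a, ∑ b, ∑ c, g a b c :=
  Finset.sum_congr rfl fun a _ => Finset.sum_congr rfl fun b _ =>
    Finset.sum_congr rfl fun c _ => h a b c

lemma sum6_add {N : ℕ}
    (f g : Fin N → Fin N → Fin N → Fin N → Fin N → Fin N → ℝ) :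
    (∑ a, ∑ b, ∑ c, ∑ a', ∑ b', ∑ c', (f a b c a' b' c' + g a b c a' b' c'))
      = (∑ a, ∑ b, ∑ c, ∑ a', ∑ b', ∑ c', f a b c a' b' c')
        + (∑ a, ∑ b, ∑ c, ∑ a', ∑ b', ∑ c', g a b c a' b' c') := by
  simp [Finset.sum_add_distrib]

lemma sum6_mul {N : ℕ} (r : ℝ)
    (f : Fin N → Fin N → Fin N → Fin N → Fin N → Fin N → ℝ) :
    (∑ a, ∑ b, ∑ c, ∑ a', ∑ b', ∑ c', r * f a b c a' b' c')
      = r * ∑ a, ∑ b, ∑ c, ∑ a', ∑ b', ∑ c', f a b c a' b' c' := by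
  simp [Finset.mul_sum]

lemma sum6_congr {N : ℕ}
    {f g : Fin N → Fin N → Fin N → Fin N → Fin N → Fin N → ℝ}
    (h : ∀ a b c a' b' c', f a b c a' b' c' = g a b c a' b' c') :
    (∑ a, ∑ b, ∑ c, ∑ a', ∑ b', ∑ c', f a b c a' b' c')
      = ∑ a, ∑ b, ∑ c, ∑ a', ∑ b', ∑ c', g a b c a' b' c' :=
  Finset.sum_congr rfl fun a _ => Finset.sum_congr rfl fun b _ =>
    Finset.sum_congr rfl fun c _ => Finset.sum_congr rfl fun a' _ =>
      Finset.sum_congr rfl fun b' _ => Finset.sum_congr rfl fun c' _ => h a b c a' b' c'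

lemma qS_add1 {N : ℕ} (A B h : Fin N → Fin N → Fin N → ℝ) :
    qS N (fun a b c => A a b c + B a b c) h = qS N A h + qS N B h := by
  simp only [qS]; rw [← sum3_add]; exact sum3_congr fun a b c => by ring

lemma qS_mul1 {N : ℕ} (r : ℝ) (A h : Fin N → Fin N → Fin N → ℝ) :
    qS N (fun a b c => r * A a b c) h = r * qS N A h := by
  simp only [qS]; rw [← sum3_mul]; exact sum3_congr fun a b c => by ring

lemma qS_add2 {N : ℕ} (A B h : Fin N → Fin N → Fin N → ℝ) :
    qS N h (fun a b c => A a b c + B a b c) = qS N h A + qS N h B := by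
  simp only [qS]; rw [← sum3_add]; exact sum3_congr fun a b c => by ring

lemma qS_mul2 {N : ℕ} (r : ℝ) (A h : Fin N → Fin N → Fin N → ℝ) :
    qS N h (fun a b c => r * A a b c) = r * qS N h A := by
  simp only [qS]; rw [← sum3_mul]; exact sum3_congr fun a b c => by ring

lemma qQ1_add1 {N : ℕ} (A B h2 h3 h4 : Fin N → Fin N → Fin N → ℝ) :
    qQ1 N (fun a b c => A a b c + B a b c) h2 h3 h4 = qQ1 N A h2 h3 h4 + qQ1 N B h2 h3 h4 := by
  simp only [qQ1]; rw [← sum6_add]; exact sum6_congr fun a b c a' b' c' => by ring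

lemma qQ1_mul1 {N : ℕ} (r : ℝ) (A h2 h3 h4 : Fin N → Fin N → Fin N → ℝ) :
    qQ1 N (fun a b c => r * A a b c) h2 h3 h4 = r * qQ1 N A h2 h3 h4 := by
  simp only [qQ1]; rw [← sum6_mul]; exact sum6_congr fun a b c a' b' c' => by ring

lemma qQ1_add2 {N : ℕ} (A B h1 h3 h4 : Fin N → Fin N → Fin N → ℝ) :
    qQ1 N h1 (fun a b c => A a b c + B a b c) h3 h4 = qQ1 N h1 A h3 h4 + qQ1 N h1 B h3 h4 := by
  simp only [qQ1]; rw [← sum6_add]; exact sum6_congr fun a b c a' b' c' => by ring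

lemma qQ1_mul2 {N : ℕ} (r : ℝ) (A h1 h3 h4 : Fin N → Fin N → Fin N → ℝ) :
    qQ1 N h1 (fun a b c => r * A a b c) h3 h4 = r * qQ1 N h1 A h3 h4 := by
  simp only [qQ1]; rw [← sum6_mul]; exact sum6_congr fun a b c a' b' c' => by ring

lemma qQ1_add3 {N : ℕ} (A B h1 h2 h4 : Fin N → Fin N → Fin N → ℝ) :
    qQ1 N h1 h2 (fun a b c => A a b c + B a b c) h4 = qQ1 N h1 h2 A h4 + qQ1 N h1 h2 B h4 := by
  simp only [qQ1]; rw [← sum6_add]; exact sum6_congr fun a b c a' b' c' => by ring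

lemma qQ1_mul3 {N : ℕ} (r : ℝ) (A h1 h2 h4 : Fin N → Fin N → Fin N → ℝ) :
    qQ1 N h1 h2 (fun a b c => r * A a b c) h4 = r * qQ1 N h1 h2 A h4 := by
  simp only [qQ1]; rw [← sum6_mul]; exact sum6_congr fun a b c a' b' c' => by ring

lemma qQ1_add4 {N : ℕ} (A B h1 h2 h3 : Fin N → Fin N → Fin N → ℝ) :
    qQ1 N h1 h2 h3 (fun a b c => A a b c + B a b c) = qQ1 N h1 h2 h3 A + qQ1 N h1 h2 h3 B := by
  simp only [qQ1]; rw [← sum6_add]; exact sum6_congr fun a b c a' b' c' => by ring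

lemma qQ1_mul4 {N : ℕ} (r : ℝ) (A h1 h2 h3 : Fin N → Fin N → Fin N → ℝ) :
    qQ1 N h1 h2 h3 (fun a b c => r * A a b c) = r * qQ1 N h1 h2 h3 A := by
  simp only [qQ1]; rw [← sum6_mul]; exact sum6_congr fun a b c a' b' c' => by ring

lemma qQ2_add1 {N : ℕ} (A B h2 h3 h4 : Fin N → Fin N → Fin N → ℝ) :
    qQ2 N (fun a b c => A a b c + B a b c) h2 h3 h4 = qQ2 N A h2 h3 h4 + qQ2 N B h2 h3 h4 := by
  simp only [qQ2]; rw [← sum6_add]; exact sum6_congr fun a b c a' b' c' => by ring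

lemma qQ2_mul1 {N : ℕ} (r : ℝ) (A h2 h3 h4 : Fin N → Fin N → Fin N → ℝ) :
    qQ2 N (fun a b c => r * A a b c) h2 h3 h4 = r * qQ2 N A h2 h3 h4 := by
  simp only [qQ2]; rw [← sum6_mul]; exact sum6_congr fun a b c a' b' c' => by ring

lemma qQ2_add2 {N : ℕ} (A B h1 h3 h4 : Fin N → Fin N → Fin N → ℝ) :
    qQ2 N h1 (fun a b c => A a b c + B a b c) h3 h4 = qQ2 N h1 A h3 h4 + qQ2 N h1 B h3 h4 := by
  simp only [qQ2]; rw [← sum6_add]; exact sum6_congr fun a b c a' b' c' => by ring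

lemma qQ2_mul2 {N : ℕ} (r : ℝ) (A h1 h3 h4 : Fin N → Fin N → Fin N → ℝ) :
    qQ2 N h1 (fun a b c => r * A a b c) h3 h4 = r * qQ2 N h1 A h3 h4 := by
  simp only [qQ2]; rw [← sum6_mul]; exact sum6_congr fun a b c a' b' c' => by ring

lemma qQ2_add3 {N : ℕ} (A B h1 h2 h4 : Fin N → Fin N → Fin N → ℝ) :
    qQ2 N h1 h2 (fun a b c => A a b c + B a b c) h4 = qQ2 N h1 h2 A h4 + qQ2 N h1 h2 B h4 := by
  simp only [qQ2]; rw [← sum6_add]; exact sum6_congr fun a b c a' b' c' => by ring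

lemma qQ2_mul3 {N : ℕ} (r : ℝ) (A h1 h2 h4 : Fin N → Fin N → Fin N → ℝ) :
    qQ2 N h1 h2 (fun a b c => r * A a b c) h4 = r * qQ2 N h1 h2 A h4 := by
  simp only [qQ2]; rw [← sum6_mul]; exact sum6_congr fun a b c a' b' c' => by ring

lemma qQ2_add4 {N : ℕ} (A B h1 h2 h3 : Fin N → Fin N → Fin N → ℝ) :
    qQ2 N h1 h2 h3 (fun a b c => A a b c + B a b c) = qQ2 N h1 h2 h3 A + qQ2 N h1 h2 h3 B := by
  simp only [qQ2]; rw [← sum6_add]; exact sum6_congr fun a b c a' b' c' => by ring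

lemma qQ2_mul4 {N : ℕ} (r : ℝ) (A h1 h2 h3 : Fin N → Fin N → Fin N → ℝ) :
    qQ2 N h1 h2 h3 (fun a b c => r * A a b c) = r * qQ2 N h1 h2 h3 A := by
  simp only [qQ2]; rw [← sum6_mul]; exact sum6_congr fun a b c a' b' c' => by ring

lemma qQ3_add1 {N : ℕ} (A B h2 h3 h4 : Fin N → Fin N → Fin N → ℝ) :
    qQ3 N (fun a b c => A a b c + B a b c) h2 h3 h4 = qQ3 N A h2 h3 h4 + qQ3 N B h2 h3 h4 := by
  simp only [qQ3]; rw [← sum6_add]; exact sum6_congr fun a b c a' b' c' => by ring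

lemma qQ3_mul1 {N : ℕ} (r : ℝ) (A h2 h3 h4 : Fin N → Fin N → Fin N → ℝ) :
    qQ3 N (fun a b c => r * A a b c) h2 h3 h4 = r * qQ3 N A h2 h3 h4 := by
  simp only [qQ3]; rw [← sum6_mul]; exact sum6_congr fun a b c a' b' c' => by ring

lemma qQ3_add2 {N : ℕ} (A B h1 h3 h4 : Fin N → Fin N → Fin N → ℝ) :
    qQ3 N h1 (fun a b c => A a b c + B a b c) h3 h4 = qQ3 N h1 A h3 h4 + qQ3 N h1 B h3 h4 := by
  simp only [qQ3]; rw [← sum6_add]; exact sum6_congr fun a b c a' b' c' => by ring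

lemma qQ3_mul2 {N : ℕ} (r : ℝ) (A h1 h3 h4 : Fin N → Fin N → Fin N → ℝ) :
    qQ3 N h1 (fun a b c => r * A a b c) h3 h4 = r * qQ3 N h1 A h3 h4 := by
  simp only [qQ3]; rw [← sum6_mul]; exact sum6_congr fun a b c a' b' c' => by ring

lemma qQ3_add3 {N : ℕ} (A B h1 h2 h4 : Fin N → Fin N → Fin N → ℝ) :
    qQ3 N h1 h2 (fun a b c => A a b c + B a b c) h4 = qQ3 N h1 h2 A h4 + qQ3 N h1 h2 B h4 := by
  simp only [qQ3]; rw [← sum6_add]; exact sum6_congr fun a b c a' b' c' => by ring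

lemma qQ3_mul3 {N : ℕ} (r : ℝ) (A h1 h2 h4 : Fin N → Fin N → Fin N → ℝ) :
    qQ3 N h1 h2 (fun a b c => r * A a b c) h4 = r * qQ3 N h1 h2 A h4 := by
  simp only [qQ3]; rw [← sum6_mul]; exact sum6_congr fun a b c a' b' c' => by ring

lemma qQ3_add4 {N : ℕ} (A B h1 h2 h3 : Fin N → Fin N → Fin N → ℝ) :
    qQ3 N h1 h2 h3 (fun a b c => A a b c + B a b c) = qQ3 N h1 h2 h3 A + qQ3 N h1 h2 h3 B := by
  simp only [qQ3]; rw [← sum6_add]; exact sum6_congr fun a b c a' b' c' => by ring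

lemma qQ3_mul4 {N : ℕ} (r : ℝ) (A h1 h2 h3 : Fin N → Fin N → Fin N → ℝ) :
    qQ3 N h1 h2 h3 (fun a b c => r * A a b c) = r * qQ3 N h1 h2 h3 A := by
  simp only [qQ3]; rw [← sum6_mul]; exact sum6_congr fun a b c a' b' c' => by ring

lemma qQ4_add1 {N : ℕ} (A B h2 h3 h4 : Fin N → Fin N → Fin N → ℝ) :
    qQ4 N (fun a b c => A a b c + B a b c) h2 h3 h4 = qQ4 N A h2 h3 h4 + qQ4 N B h2 h3 h4 := by
  simp only [qQ4]; rw [← sum6_add]; exact sum6_congr fun a b c a' b' c' => by ring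

lemma qQ4_mul1 {N : ℕ} (r : ℝ) (A h2 h3 h4 : Fin N → Fin N → Fin N → ℝ) :
    qQ4 N (fun a b c => r * A a b c) h2 h3 h4 = r * qQ4 N A h2 h3 h4 := by
  simp only [qQ4]; rw [← sum6_mul]; exact sum6_congr fun a b c a' b' c' => by ring

lemma qQ4_add2 {N : ℕ} (A B h1 h3 h4 : Fin N → Fin N → Fin N → ℝ) :
    qQ4 N h1 (fun a b c => A a b c + B a b c) h3 h4 = qQ4 N h1 A h3 h4 + qQ4 N h1 B h3 h4 := by
  simp only [qQ4]; rw [← sum6_add]; exact sum6_congr fun a b c a' b' c' => by ring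

lemma qQ4_mul2 {N : ℕ} (r : ℝ) (A h1 h3 h4 : Fin N → Fin N → Fin N → ℝ) :
    qQ4 N h1 (fun a b c => r * A a b c) h3 h4 = r * qQ4 N h1 A h3 h4 := by
  simp only [qQ4]; rw [← sum6_mul]; exact sum6_congr fun a b c a' b' c' => by ring

lemma qQ4_add3 {N : ℕ} (A B h1 h2 h4 : Fin N → Fin N → Fin N → ℝ) :
    qQ4 N h1 h2 (fun a b c => A a b c + B a b c) h4 = qQ4 N h1 h2 A h4 + qQ4 N h1 h2 B h4 := by
  simp only [qQ4]; rw [← sum6_add]; exact sum6_congr fun a b c a' b' c' => by ring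

lemma qQ4_mul3 {N : ℕ} (r : ℝ) (A h1 h2 h4 : Fin N → Fin N → Fin N → ℝ) :
    qQ4 N h1 h2 (fun a b c => r * A a b c) h4 = r * qQ4 N h1 h2 A h4 := by
  simp only [qQ4]; rw [← sum6_mul]; exact sum6_congr fun a b c a' b' c' => by ring

lemma qQ4_add4 {N : ℕ} (A B h1 h2 h3 : Fin N → Fin N → Fin N → ℝ) :
    qQ4 N h1 h2 h3 (fun a b c => A a b c + B a b c) = qQ4 N h1 h2 h3 A + qQ4 N h1 h2 h3 B := by
  simp only [qQ4]; rw [← sum6_add]; exact sum6_congr fun a b c a' b' c' => by ring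

lemma qQ4_mul4 {N : ℕ} (r : ℝ) (A h1 h2 h3 : Fin N → Fin N → Fin N → ℝ) :
    qQ4 N h1 h2 h3 (fun a b c => r * A a b c) = r * qQ4 N h1 h2 h3 A := by
  simp only [qQ4]; rw [← sum6_mul]; exact sum6_congr fun a b c a' b' c' => by ring

lemma potV_eq (N : ℕ) (l2 ld lp lt a1 a2 a3 : ℝ) (f : Fin N → Fin N → Fin N → ℝ) :
    potV N l2 ld lp lt a1 a2 a3 f
      = l2 / 2 * qS N f f + ld / (4 * (N : ℝ) ^ 3) * (qS N f f) ^ 2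
        + lp / (4 * (N : ℝ) ^ 2) *
            (a1 * qQ1 N f f f f + a2 * qQ2 N f f f f + a3 * qQ3 N f f f f)
        + lt / (4 * (N : ℝ) ^ ((3 : ℝ) / 2)) * qQ4 N f f f f := by
  simp only [potV, qS, qQ1, qQ2, qQ3, qQ4, pow_two]

set_option maxHeartbeats 4000000 in
lemma potV_expand (N : ℕ) (l2 ld lp lt a1 a2 a3 : ℝ)
    (X Y Z : Fin N → Fin N → Fin N → ℝ) (s t : ℝ) :
    potV N l2 ld lp lt a1 a2 a3
      (fun a b c => X a b c + t * Y a b c + s * Z a b c)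
    = ((l2/2*((qS N X X)) + ld/(4*(N:ℝ)^3)*((qS N X X)*(qS N X X)) + lp/(4*(N:ℝ)^2)*(a1*((qQ1 N X X X X)) + a2*((qQ2 N X X X X)) + a3*((qQ3 N X X X X))) + lt/(4*(N:ℝ)^((3:ℝ)/2))*((qQ4 N X X X X)))
      + (l2/2*((qS N X Z) + (qS N Z X)) + ld/(4*(N:ℝ)^3)*(2*(qS N X X)*(qS N X Z) + 2*(qS N X X)*(qS N Z X)) + lp/(4*(N:ℝ)^2)*(a1*((qQ1 N X X X Z) + (qQ1 N X X Z X) + (qQ1 N X Z X X) + (qQ1 N Z X X X)) + a2*((qQ2 N X X X Z) + (qQ2 N X X Z X) + (qQ2 N X Z X X) + (qQ2 N Z X X X)) + a3*((qQ3 N X X X Z) + (qQ3 N X X Z X) + (qQ3 N X Z X X) + (qQ3 N Z X X X))) + lt/(4*(N:ℝ)^((3:ℝ)/2))*((qQ4 N X X X Z) + (qQ4 N X X Z X) + (qQ4 N X Z X X) + (qQ4 N Z X X X))) * s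
      + (l2/2*((qS N Z Z)) + ld/(4*(N:ℝ)^3)*(2*(qS N X X)*(qS N Z Z) + (qS N X Z)*(qS N X Z) + 2*(qS N X Z)*(qS N Z X) + (qS N Z X)*(qS N Z X)) + lp/(4*(N:ℝ)^2)*(a1*((qQ1 N X X Z Z) + (qQ1 N X Z X Z) + (qQ1 N X Z Z X) + (qQ1 N Z X X Z) + (qQ1 N Z X Z X) + (qQ1 N Z Z X X)) + a2*((qQ2 N X X Z Z) + (qQ2 N X Z X Z) + (qQ2 N X Z Z X) + (qQ2 N Z X X Z) + (qQ2 N Z X Z X) + (qQ2 N Z Z X X)) + a3*((qQ3 N X X Z Z) + (qQ3 N X Z X Z) + (qQ3 N X Z Z X) + (qQ3 N Z X X Z) + (qQ3 N Z X Z X) + (qQ3 N Z Z X X))) + lt/(4*(N:ℝ)^((3:ℝ)/2))*((qQ4 N X X Z Z) + (qQ4 N X Z X Z) + (qQ4 N X Z Z X) + (qQ4 N Z X X Z) + (qQ4 N Z X Z X) + (qQ4 N Z Z X X))) * s ^ 2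
      + (ld/(4*(N:ℝ)^3)*(2*(qS N X Z)*(qS N Z Z) + 2*(qS N Z X)*(qS N Z Z)) + lp/(4*(N:ℝ)^2)*(a1*((qQ1 N X Z Z Z) + (qQ1 N Z X Z Z) + (qQ1 N Z Z X Z) + (qQ1 N Z Z Z X)) + a2*((qQ2 N X Z Z Z) + (qQ2 N Z X Z Z) + (qQ2 N Z Z X Z) + (qQ2 N Z Z Z X)) + a3*((qQ3 N X Z Z Z) + (qQ3 N Z X Z Z) + (qQ3 N Z Z X Z) + (qQ3 N Z Z Z X))) + lt/(4*(N:ℝ)^((3:ℝ)/2))*((qQ4 N X Z Z Z) + (qQ4 N Z X Z Z) + (qQ4 N Z Z X Z) + (qQ4 N Z Z Z X))) * s ^ 3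
      + (ld/(4*(N:ℝ)^3)*((qS N Z Z)*(qS N Z Z)) + lp/(4*(N:ℝ)^2)*(a1*((qQ1 N Z Z Z Z)) + a2*((qQ2 N Z Z Z Z)) + a3*((qQ3 N Z Z Z Z))) + lt/(4*(N:ℝ)^((3:ℝ)/2))*((qQ4 N Z Z Z Z))) * s ^ 4)
    + ((l2/2*((qS N X Y) + (qS N Y X)) + ld/(4*(N:ℝ)^3)*(2*(qS N X X)*(qS N X Y) + 2*(qS N X X)*(qS N Y X)) + lp/(4*(N:ℝ)^2)*(a1*((qQ1 N X X X Y) + (qQ1 N X X Y X) + (qQ1 N X Y X X) + (qQ1 N Y X X X)) + a2*((qQ2 N X X X Y) + (qQ2 N X X Y X) + (qQ2 N X Y X X) + (qQ2 N Y X X X)) + a3*((qQ3 N X X X Y) + (qQ3 N X X Y X) + (qQ3 N X Y X X) + (qQ3 N Y X X X))) + lt/(4*(N:ℝ)^((3:ℝ)/2))*((qQ4 N X X X Y) + (qQ4 N X X Y X) + (qQ4 N X Y X X) + (qQ4 N Y X X X)))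
      + (l2/2*((qS N Y Z) + (qS N Z Y)) + ld/(4*(N:ℝ)^3)*(2*(qS N X X)*(qS N Y Z) + 2*(qS N X X)*(qS N Z Y) + 2*(qS N X Y)*(qS N X Z) + 2*(qS N X Y)*(qS N Z X) + 2*(qS N X Z)*(qS N Y X) + 2*(qS N Y X)*(qS N Z X)) + lp/(4*(N:ℝ)^2)*(a1*((qQ1 N X X Y Z) + (qQ1 N X X Z Y) + (qQ1 N X Y X Z) + (qQ1 N X Y Z X) + (qQ1 N X Z X Y) + (qQ1 N X Z Y X) + (qQ1 N Y X X Z) + (qQ1 N Y X Z X) + (qQ1 N Y Z X X) + (qQ1 N Z X X Y) + (qQ1 N Z X Y X) + (qQ1 N Z Y X X)) + a2*((qQ2 N X X Y Z) + (qQ2 N X X Z Y) + (qQ2 N X Y X Z) + (qQ2 N X Y Z X) + (qQ2 N X Z X Y) + (qQ2 N X Z Y X) + (qQ2 N Y X X Z) + (qQ2 N Y X Z X) + (qQ2 N Y Z X X) + (qQ2 N Z X X Y) + (qQ2 N Z X Y X) + (qQ2 N Z Y X X)) + a3*((qQ3 N X X Y Z) + (qQ3 N X X Z Y) + (qQ3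 N X Y X Z) + (qQ3 N X Y Z X) + (qQ3 N X Z X Y) + (qQ3 N X Z Y X) + (qQ3 N Y X X Z) + (qQ3 N Y X Z X) + (qQ3 N Y Z X X) + (qQ3 N Z X X Y) + (qQ3 N Z X Y X) + (qQ3 N Z Y X X))) + lt/(4*(N:ℝ)^((3:ℝ)/2))*((qQ4 N X X Y Z) + (qQ4 N X X Z Y) + (qQ4 N X Y X Z) + (qQ4 N X Y Z X) + (qQ4 N X Z X Y) + (qQ4 N X Z Y X) + (qQ4 N Y X X Z) + (qQ4 N Y X Z X) + (qQ4 N Y Z X X) + (qQ4 N Z X X Y) + (qQ4 N Z X Y X) + (qQ4 N Z Y X X))) * s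
      + (ld/(4*(N:ℝ)^3)*(2*(qS N X Y)*(qS N Z Z) + 2*(qS N X Z)*(qS N Y Z) + 2*(qS N X Z)*(qS N Z Y) + 2*(qS N Y X)*(qS N Z Z) + 2*(qS N Y Z)*(qS N Z X) + 2*(qS N Z X)*(qS N Z Y)) + lp/(4*(N:ℝ)^2)*(a1*((qQ1 N X Y Z Z) + (qQ1 N X Z Y Z) + (qQ1 N X Z Z Y) + (qQ1 N Y X Z Z) + (qQ1 N Y Z X Z) + (qQ1 N Y Z Z X) + (qQ1 N Z X Y Z) + (qQ1 N Z X Z Y) + (qQ1 N Z Y X Z) + (qQ1 N Z Y Z X) + (qQ1 N Z Z X Y) + (qQ1 N Z Z Y X)) + a2*((qQ2 N X Y Z Z) + (qQ2 N X Z Y Z) + (qQ2 N X Z Z Y) + (qQ2 N Y X Z Z) + (qQ2 N Y Z X Z) + (qQ2 N Y Z Z X) + (qQ2 N Z X Y Z) + (qQ2 N Z X Z Y) + (qQ2 N Z Y X Z) + (qQ2 N Z Y Z X) + (qQ2 N Z Z X Y) + (qQ2 N Z Z Y X)) + a3*((qQ3 N X Y Z Z) + (qQ3 N X Z Y Z)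 + (qQ3 N X Z Z Y) + (qQ3 N Y X Z Z) + (qQ3 N Y Z X Z) + (qQ3 N Y Z Z X) + (qQ3 N Z X Y Z) + (qQ3 N Z X Z Y) + (qQ3 N Z Y X Z) + (qQ3 N Z Y Z X) + (qQ3 N Z Z X Y) + (qQ3 N Z Z Y X))) + lt/(4*(N:ℝ)^((3:ℝ)/2))*((qQ4 N X Y Z Z) + (qQ4 N X Z Y Z) + (qQ4 N X Z Z Y) + (qQ4 N Y X Z Z) + (qQ4 N Y Z X Z) + (qQ4 N Y Z Z X) + (qQ4 N Z X Y Z) + (qQ4 N Z X Z Y) + (qQ4 N Z Y X Z) + (qQ4 N Z Y Z X) + (qQ4 N Z Z X Y) + (qQ4 N Z Z Y X))) * s ^ 2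
      + (ld/(4*(N:ℝ)^3)*(2*(qS N Y Z)*(qS N Z Z) + 2*(qS N Z Y)*(qS N Z Z)) + lp/(4*(N:ℝ)^2)*(a1*((qQ1 N Y Z Z Z) + (qQ1 N Z Y Z Z) + (qQ1 N Z Z Y Z) + (qQ1 N Z Z Z Y)) + a2*((qQ2 N Y Z Z Z) + (qQ2 N Z Y Z Z) + (qQ2 N Z Z Y Z) + (qQ2 N Z Z Z Y)) + a3*((qQ3 N Y Z Z Z) + (qQ3 N Z Y Z Z) + (qQ3 N Z Z Y Z) + (qQ3 N Z Z Z Y))) + lt/(4*(N:ℝ)^((3:ℝ)/2))*((qQ4 N Y Z Z Z) + (qQ4 N Z Y Z Z) + (qQ4 N Z Z Y Z) + (qQ4 N Z Z Z Y))) * s ^ 3) * t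
    + ((l2/2*((qS N Y Y)) + ld/(4*(N:ℝ)^3)*(2*(qS N X X)*(qS N Y Y) + (qS N X Y)*(qS N X Y) + 2*(qS N X Y)*(qS N Y X) + (qS N Y X)*(qS N Y X)) + lp/(4*(N:ℝ)^2)*(a1*((qQ1 N X X Y Y) + (qQ1 N X Y X Y) + (qQ1 N X Y Y X) + (qQ1 N Y X X Y) + (qQ1 N Y X Y X) + (qQ1 N Y Y X X)) + a2*((qQ2 N X X Y Y) + (qQ2 N X Y X Y) + (qQ2 N X Y Y X) + (qQ2 N Y X X Y) + (qQ2 N Y X Y X) + (qQ2 N Y Y X X)) + a3*((qQ3 N X X Y Y) + (qQ3 N X Y X Y) + (qQ3 N X Y Y X) + (qQ3 N Y X X Y) + (qQ3 N Y X Y X) + (qQ3 N Y Y X X))) + lt/(4*(N:ℝ)^((3:ℝ)/2))*((qQ4 N X X Y Y) + (qQ4 N X Y X Y) + (qQ4 N X Y Y X) + (qQ4 N Y X X Y) + (qQ4 N Y X Y X) + (qQ4 N Y Y X X)))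
      + (ld/(4*(N:ℝ)^3)*(2*(qS N X Y)*(qS N Y Z) + 2*(qS N X Y)*(qS N Z Y) + 2*(qS N X Z)*(qS N Y Y) + 2*(qS N Y X)*(qS N Y Z) + 2*(qS N Y X)*(qS N Z Y) + 2*(qS N Y Y)*(qS N Z X)) + lp/(4*(N:ℝ)^2)*(a1*((qQ1 N X Y Y Z) + (qQ1 N X Y Z Y) + (qQ1 N X Z Y Y) + (qQ1 N Y X Y Z) + (qQ1 N Y X Z Y) + (qQ1 N Y Y X Z) + (qQ1 N Y Y Z X) + (qQ1 N Y Z X Y) + (qQ1 N Y Z Y X) + (qQ1 N Z X Y Y) + (qQ1 N Z Y X Y) + (qQ1 N Z Y Y X)) + a2*((qQ2 N X Y Y Z) + (qQ2 N X Y Z Y) + (qQ2 N X Z Y Y) + (qQ2 N Y X Y Z) + (qQ2 N Y X Z Y) + (qQ2 N Y Y X Z) + (qQ2 N Y Y Z X) + (qQ2 N Y Z X Y) + (qQ2 N Y Z Y X) + (qQ2 N Z X Y Y) + (qQ2 N Z Y X Y) + (qQ2 N Z Y Y X)) + a3*((qQ3 N X Y Y Z) + (qQ3 N X Y Z Y)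 + (qQ3 N X Z Y Y) + (qQ3 N Y X Y Z) + (qQ3 N Y X Z Y) + (qQ3 N Y Y X Z) + (qQ3 N Y Y Z X) + (qQ3 N Y Z X Y) + (qQ3 N Y Z Y X) + (qQ3 N Z X Y Y) + (qQ3 N Z Y X Y) + (qQ3 N Z Y Y X))) + lt/(4*(N:ℝ)^((3:ℝ)/2))*((qQ4 N X Y Y Z) + (qQ4 N X Y Z Y) + (qQ4 N X Z Y Y) + (qQ4 N Y X Y Z) + (qQ4 N Y X Z Y) + (qQ4 N Y Y X Z) + (qQ4 N Y Y Z X) + (qQ4 N Y Z X Y) + (qQ4 N Y Z Y X) + (qQ4 N Z X Y Y) + (qQ4 N Z Y X Y) + (qQ4 N Z Y Y X))) * s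
      + (ld/(4*(N:ℝ)^3)*(2*(qS N Y Y)*(qS N Z Z) + (qS N Y Z)*(qS N Y Z) + 2*(qS N Y Z)*(qS N Z Y) + (qS N Z Y)*(qS N Z Y)) + lp/(4*(N:ℝ)^2)*(a1*((qQ1 N Y Y Z Z) + (qQ1 N Y Z Y Z) + (qQ1 N Y Z Z Y) + (qQ1 N Z Y Y Z) + (qQ1 N Z Y Z Y) + (qQ1 N Z Z Y Y)) + a2*((qQ2 N Y Y Z Z) + (qQ2 N Y Z Y Z) + (qQ2 N Y Z Z Y) + (qQ2 N Z Y Y Z) + (qQ2 N Z Y Z Y) + (qQ2 N Z Z Y Y)) + a3*((qQ3 N Y Y Z Z) + (qQ3 N Y Z Y Z) + (qQ3 N Y Z Z Y) + (qQ3 N Z Y Y Z) + (qQ3 N Z Y Z Y) + (qQ3 N Z Z Y Y))) + lt/(4*(N:ℝ)^((3:ℝ)/2))*((qQ4 N Y Y Z Z) + (qQ4 N Y Z Y Z) + (qQ4 N Y Z Z Y) + (qQ4 N Z Y Y Z) + (qQ4 N Z Y Z Y) + (qQ4 N Z Z Y Y))) * s ^ 2) * t ^ 2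
    + ((ld/(4*(N:ℝ)^3)*(2*(qS N X Y)*(qS N Y Y) + 2*(qS N Y X)*(qS N Y Y)) + lp/(4*(N:ℝ)^2)*(a1*((qQ1 N X Y Y Y) + (qQ1 N Y X Y Y) + (qQ1 N Y Y X Y) + (qQ1 N Y Y Y X)) + a2*((qQ2 N X Y Y Y) + (qQ2 N Y X Y Y) + (qQ2 N Y Y X Y) + (qQ2 N Y Y Y X)) + a3*((qQ3 N X Y Y Y) + (qQ3 N Y X Y Y) + (qQ3 N Y Y X Y) + (qQ3 N Y Y Y X))) + lt/(4*(N:ℝ)^((3:ℝ)/2))*((qQ4 N X Y Y Y) + (qQ4 N Y X Y Y) + (qQ4 N Y Y X Y) + (qQ4 N Y Y Y X)))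
      + (ld/(4*(N:ℝ)^3)*(2*(qS N Y Y)*(qS N Y Z) + 2*(qS N Y Y)*(qS N Z Y)) + lp/(4*(N:ℝ)^2)*(a1*((qQ1 N Y Y Y Z) + (qQ1 N Y Y Z Y) + (qQ1 N Y Z Y Y) + (qQ1 N Z Y Y Y)) + a2*((qQ2 N Y Y Y Z) + (qQ2 N Y Y Z Y) + (qQ2 N Y Z Y Y) + (qQ2 N Z Y Y Y)) + a3*((qQ3 N Y Y Y Z) + (qQ3 N Y Y Z Y) + (qQ3 N Y Z Y Y) + (qQ3 N Z Y Y Y))) + lt/(4*(N:ℝ)^((3:ℝ)/2))*((qQ4 N Y Y Y Z) + (qQ4 N Y Y Z Y) + (qQ4 N Y Z Y Y) + (qQ4 N Z Y Y Y))) * s) * t ^ 3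
    + ((ld/(4*(N:ℝ)^3)*((qS N Y Y)*(qS N Y Y)) + lp/(4*(N:ℝ)^2)*(a1*((qQ1 N Y Y Y Y)) + a2*((qQ2 N Y Y Y Y)) + a3*((qQ3 N Y Y Y Y))) + lt/(4*(N:ℝ)^((3:ℝ)/2))*((qQ4 N Y Y Y Y)))) * t ^ 4 := by
  rw [potV_eq]
  simp only [qS_add1, qS_mul1,qS_add2, qS_mul2,qQ1_add1, qQ1_mul1,qQ1_add2, qQ1_mul2,qQ1_add3, qQ1_mul3,qQ1_add4, qQ1_mul4,qQ2_add1, qQ2_mul1,qQ2_add2, qQ2_mul2,qQ2_add3, qQ2_mul3,qQ2_add4, qQ2_mul4,qQ3_add1, qQ3_mul1,qQ3_add2, qQ3_mul2,qQ3_add3, qQ3_mul3,qQ3_add4, qQ3_mul4,qQ4_add1, qQ4_mul1,qQ4_add2, qQ4_mul2,qQ4_add3, qQ4_mul3,qQ4_add4, qQ4_mul4]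
  ring

lemma deriv_poly4 (c0 c1 c2 c3 c4 : ℝ) :
    deriv (fun t : ℝ => c0 + c1 * t + c2 * t ^ 2 + c3 * t ^ 3 + c4 * t ^ 4) 0 = c1 := by
  have h := ((((hasDerivAt_const (0:ℝ) c0).add ((hasDerivAt_id' (0:ℝ)).const_mul c1)).add
      ((hasDerivAt_pow 2 (0:ℝ)).const_mul c2)).add
      ((hasDerivAt_pow 3 (0:ℝ)).const_mul c3)).add
      ((hasDerivAt_pow 4 (0:ℝ)).const_mul c4)
  have h2 := h.deriv; simp at h2; exact h2

lemma deriv_poly3 (c0 c1 c2 c3 : ℝ) :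
    deriv (fun t : ℝ => c0 + c1 * t + c2 * t ^ 2 + c3 * t ^ 3) 0 = c1 := by
  have h := (((hasDerivAt_const (0:ℝ) c0).add ((hasDerivAt_id' (0:ℝ)).const_mul c1)).add
      ((hasDerivAt_pow 2 (0:ℝ)).const_mul c2)).add
      ((hasDerivAt_pow 3 (0:ℝ)).const_mul c3)
  have h2 := h.deriv; simp at h2; exact h2

lemma sum_mul3 {N : ℕ} (p q r : Fin N → ℝ) :
    (∑ i, p i) * (∑ i, q i) * (∑ i, r i)
      = ∑ i3, ∑ i2, ∑ i1, p i1 * q i2 * r i3 := by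
  simp only [Finset.sum_mul, Finset.mul_sum]

lemma sum_mul6 {N : ℕ} (f1 f2 f3 f4 f5 f6 : Fin N → ℝ) :
    (∑ i, f1 i) * (∑ i, f2 i) * (∑ i, f3 i) * (∑ i, f4 i) * (∑ i, f5 i) * (∑ i, f6 i)
      = ∑ i6, ∑ i5, ∑ i4, ∑ i3, ∑ i2, ∑ i1,
          f1 i1 * f2 i2 * f3 i3 * f4 i4 * f5 i5 * f6 i6 := by
  simp only [Finset.sum_mul, Finset.mul_sum]

lemma qip_dlt {N : ℕ} (f : Fin N → ℝ) (i : Fin N) : qip f (dlt i) = f i := by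
  simp [qip, dlt]

lemma dlt_qip {N : ℕ} (f : Fin N → ℝ) (i : Fin N) : qip (dlt i) f = f i := by
  simp [qip, dlt]

lemma qS_rank1 {N : ℕ} (x1 y1 z1 x2 y2 z2 : Fin N → ℝ) :
    qS N (fun a b c => x1 a * y1 b * z1 c) (fun a b c => x2 a * y2 b * z2 c)
      = qip z1 z2 * qip y1 y2 * qip x1 x2 := by
  simp only [qS, qip]
  rw [sum_mul3]
  exact sum3_congr fun a b c => by ring

lemma ite_dlt {N : ℕ} (a b c a' b' c' : Fin N) :
    (if a' = a ∧ b' = b ∧ c' = c then (1:ℝ) else 0) = dlt a a' * dlt b b' * dlt c c' := by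
  by_cases h1 : a' = a <;> by_cases h2 : b' = b <;> by_cases h3 : c' = c <;>
    simp [dlt, h1, h2, h3]

lemma qQ1_rank1 {N : ℕ} (x1 y1 z1 x2 y2 z2 x3 y3 z3 x4 y4 z4 : Fin N → ℝ) :
    qQ1 N (fun a b c => x1 a * y1 b * z1 c) (fun a b c => x2 a * y2 b * z2 c)
      (fun a b c => x3 a * y3 b * z3 c) (fun a b c => x4 a * y4 b * z4 c)
      = qip z2 z3 * qip y2 y3 * qip x3 x4 * qip z1 z4 * qip y1 y4 * qip x1 x2 := by
  simp only [qQ1, qip]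
  rw [sum_mul6]
  exact sum6_congr fun a b c a' b' c' => by ring

lemma qQ2_rank1 {N : ℕ} (x1 y1 z1 x2 y2 z2 x3 y3 z3 x4 y4 z4 : Fin N → ℝ) :
    qQ2 N (fun a b c => x1 a * y1 b * z1 c) (fun a b c => x2 a * y2 b * z2 c)
      (fun a b c => x3 a * y3 b * z3 c) (fun a b c => x4 a * y4 b * z4 c)
      = qip z2 z3 * qip y3 y4 * qip x2 x3 * qip z1 z4 * qip y1 y2 * qip x1 x4 := by
  simp only [qQ2, qip]
  rw [sum_mul6]
  exact sum6_congr fun a b c a' b' c' => by ring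

lemma qQ3_rank1 {N : ℕ} (x1 y1 z1 x2 y2 z2 x3 y3 z3 x4 y4 z4 : Fin N → ℝ) :
    qQ3 N (fun a b c => x1 a * y1 b * z1 c) (fun a b c => x2 a * y2 b * z2 c)
      (fun a b c => x3 a * y3 b * z3 c) (fun a b c => x4 a * y4 b * z4 c)
      = qip z3 z4 * qip y2 y3 * qip x2 x3 * qip z1 z2 * qip y1 y4 * qip x1 x4 := by
  simp only [qQ3, qip]
  rw [sum_mul6]
  exact sum6_congr fun a b c a' b' c' => by ring

lemma qQ4_rank1 {N : ℕ} (x1 y1 z1 x2 y2 z2 x3 y3 z3 x4 y4 z4 : Fin N → ℝ) :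
    qQ4 N (fun a b c => x1 a * y1 b * z1 c) (fun a b c => x2 a * y2 b * z2 c)
      (fun a b c => x3 a * y3 b * z3 c) (fun a b c => x4 a * y4 b * z4 c)
      = qip z2 z3 * qip y2 y4 * qip x3 x4 * qip z1 z4 * qip y1 y3 * qip x1 x2 := by
  simp only [qQ4, qip]
  rw [sum_mul6]
  exact sum6_congr fun a b c a' b' c' => by ring

set_option maxHeartbeats 2000000 in
lemma hess_eval (N : ℕ) (l2 ld lp lt a1 a2 a3 : ℝ) (X Y Z : Fin N → Fin N → Fin N → ℝ) :
    deriv (fun s : ℝ => deriv (fun t : ℝ =>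
      potV N l2 ld lp lt a1 a2 a3 (fun a b c => X a b c + t * Y a b c + s * Z a b c)) 0) 0
    = (l2/2*((qS N Y Z) + (qS N Z Y)) + ld/(4*(N:ℝ)^3)*(2*(qS N X X)*(qS N Y Z) + 2*(qS N X X)*(qS N Z Y) + 2*(qS N X Y)*(qS N X Z) + 2*(qS N X Y)*(qS N Z X) + 2*(qS N X Z)*(qS N Y X) + 2*(qS N Y X)*(qS N Z X)) + lp/(4*(N:ℝ)^2)*(a1*((qQ1 N X X Y Z) + (qQ1 N X X Z Y) + (qQ1 N X Y X Z) + (qQ1 N X Y Z X) + (qQ1 N X Z X Y) + (qQ1 N X Z Y X) + (qQ1 N Y X X Z) + (qQ1 N Y X Z X) + (qQ1 N Y Z X X) + (qQ1 N Z X X Y) + (qQ1 N Z X Y X) + (qQ1 N Z Y X X)) + a2*((qQ2 N X X Y Z) + (qQ2 N X X Z Y) + (qQ2 N X Y X Z) + (qQ2 N X Y Z X) + (qQ2 N X Z X Y) + (qQ2 N X Z Y X) + (qQ2 N Y X X Z) + (qQ2 N Y X Z X) + (qQ2 N Y Z X X) + (qQ2 N Z X X Y) + (qQ2 N Z X Y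 X) + (qQ2 N Z Y X X)) + a3*((qQ3 N X X Y Z) + (qQ3 N X X Z Y) + (qQ3 N X Y X Z) + (qQ3 N X Y Z X) + (qQ3 N X Z X Y) + (qQ3 N X Z Y X) + (qQ3 N Y X X Z) + (qQ3 N Y X Z X) + (qQ3 N Y Z X X) + (qQ3 N Z X X Y) + (qQ3 N Z X Y X) + (qQ3 N Z Y X X))) + lt/(4*(N:ℝ)^((3:ℝ)/2))*((qQ4 N X X Y Z) + (qQ4 N X X Z Y) + (qQ4 N X Y X Z) + (qQ4 N X Y Z X) + (qQ4 N X Z X Y) + (qQ4 N X Z Y X) + (qQ4 N Y X X Z) + (qQ4 N Y X Z X) + (qQ4 N Y Z X X) + (qQ4 N Z X X Y) + (qQ4 N Z X Y X) + (qQ4 N Z Y X X))) := by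
  have h1 : (fun s : ℝ => deriv (fun t : ℝ =>
      potV N l2 ld lp lt a1 a2 a3 (fun a b c => X a b c + t * Y a b c + s * Z a b c)) 0)
      = fun s : ℝ => ((l2/2*((qS N X Y) + (qS N Y X)) + ld/(4*(N:ℝ)^3)*(2*(qS N X X)*(qS N X Y) + 2*(qS N X X)*(qS N Y X)) + lp/(4*(N:ℝ)^2)*(a1*((qQ1 N X X X Y) + (qQ1 N X X Y X) + (qQ1 N X Y X X) + (qQ1 N Y X X X)) + a2*((qQ2 N X X X Y) + (qQ2 N X X Y X) + (qQ2 N X Y X X) + (qQ2 N Y X X X)) + a3*((qQ3 N X X X Y) + (qQ3 N X X Y X) + (qQ3 N X Y X X) + (qQ3 N Y X X X))) + lt/(4*(N:ℝ)^((3:ℝ)/2))*((qQ4 N X X X Y) + (qQ4 N X X Y X) + (qQ4 N X Y X X) + (qQ4 N Y X X X)))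
      + (l2/2*((qS N Y Z) + (qS N Z Y)) + ld/(4*(N:ℝ)^3)*(2*(qS N X X)*(qS N Y Z) + 2*(qS N X X)*(qS N Z Y) + 2*(qS N X Y)*(qS N X Z) + 2*(qS N X Y)*(qS N Z X) + 2*(qS N X Z)*(qS N Y X) + 2*(qS N Y X)*(qS N Z X)) + lp/(4*(N:ℝ)^2)*(a1*((qQ1 N X X Y Z) + (qQ1 N X X Z Y) + (qQ1 N X Y X Z) + (qQ1 N X Y Z X) + (qQ1 N X Z X Y) + (qQ1 N X Z Y X) + (qQ1 N Y X X Z) + (qQ1 N Y X Z X) + (qQ1 N Y Z X X) + (qQ1 N Z X X Y) + (qQ1 N Z X Y X) + (qQ1 N Z Y X X)) + a2*((qQ2 N X X Y Z) + (qQ2 N X X Z Y) + (qQ2 N X Y X Z) + (qQ2 N X Y Z X) + (qQ2 N X Z X Y) + (qQ2 N X Z Y X) + (qQ2 N Y X X Z) + (qQ2 N Y X Z X) + (qQ2 N Y Z X X) + (qQ2 N Z X X Y) + (qQ2 N Z X Y X) + (qQ2 N Z Y X X)) + a3*((qQ3 N X X Y Z) + (qQ3 N X X Z Y) + (qQ3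 N X Y X Z) + (qQ3 N X Y Z X) + (qQ3 N X Z X Y) + (qQ3 N X Z Y X) + (qQ3 N Y X X Z) + (qQ3 N Y X Z X) + (qQ3 N Y Z X X) + (qQ3 N Z X X Y) + (qQ3 N Z X Y X) + (qQ3 N Z Y X X))) + lt/(4*(N:ℝ)^((3:ℝ)/2))*((qQ4 N X X Y Z) + (qQ4 N X X Z Y) + (qQ4 N X Y X Z) + (qQ4 N X Y Z X) + (qQ4 N X Z X Y) + (qQ4 N X Z Y X) + (qQ4 N Y X X Z) + (qQ4 N Y X Z X) + (qQ4 N Y Z X X) + (qQ4 N Z X X Y) + (qQ4 N Z X Y X) + (qQ4 N Z Y X X))) * s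
      + (ld/(4*(N:ℝ)^3)*(2*(qS N X Y)*(qS N Z Z) + 2*(qS N X Z)*(qS N Y Z) + 2*(qS N X Z)*(qS N Z Y) + 2*(qS N Y X)*(qS N Z Z) + 2*(qS N Y Z)*(qS N Z X) + 2*(qS N Z X)*(qS N Z Y)) + lp/(4*(N:ℝ)^2)*(a1*((qQ1 N X Y Z Z) + (qQ1 N X Z Y Z) + (qQ1 N X Z Z Y) + (qQ1 N Y X Z Z) + (qQ1 N Y Z X Z) + (qQ1 N Y Z Z X) + (qQ1 N Z X Y Z) + (qQ1 N Z X Z Y) + (qQ1 N Z Y X Z) + (qQ1 N Z Y Z X) + (qQ1 N Z Z X Y) + (qQ1 N Z Z Y X)) + a2*((qQ2 N X Y Z Z) + (qQ2 N X Z Y Z) + (qQ2 N X Z Z Y) + (qQ2 N Y X Z Z) + (qQ2 N Y Z X Z) + (qQ2 N Y Z Z X) + (qQ2 N Z X Y Z) + (qQ2 N Z X Z Y) + (qQ2 N Z Y X Z) + (qQ2 N Z Y Z X) + (qQ2 N Z Z X Y) + (qQ2 N Z Z Y X)) + a3*((qQ3 N X Y Z Z) + (qQ3 N X Z Y Z)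 + (qQ3 N X Z Z Y) + (qQ3 N Y X Z Z) + (qQ3 N Y Z X Z) + (qQ3 N Y Z Z X) + (qQ3 N Z X Y Z) + (qQ3 N Z X Z Y) + (qQ3 N Z Y X Z) + (qQ3 N Z Y Z X) + (qQ3 N Z Z X Y) + (qQ3 N Z Z Y X))) + lt/(4*(N:ℝ)^((3:ℝ)/2))*((qQ4 N X Y Z Z) + (qQ4 N X Z Y Z) + (qQ4 N X Z Z Y) + (qQ4 N Y X Z Z) + (qQ4 N Y Z X Z) + (qQ4 N Y Z Z X) + (qQ4 N Z X Y Z) + (qQ4 N Z X Z Y) + (qQ4 N Z Y X Z) + (qQ4 N Z Y Z X) + (qQ4 N Z Z X Y) + (qQ4 N Z Z Y X))) * s ^ 2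
      + (ld/(4*(N:ℝ)^3)*(2*(qS N Y Z)*(qS N Z Z) + 2*(qS N Z Y)*(qS N Z Z)) + lp/(4*(N:ℝ)^2)*(a1*((qQ1 N Y Z Z Z) + (qQ1 N Z Y Z Z) + (qQ1 N Z Z Y Z) + (qQ1 N Z Z Z Y)) + a2*((qQ2 N Y Z Z Z) + (qQ2 N Z Y Z Z) + (qQ2 N Z Z Y Z) + (qQ2 N Z Z Z Y)) + a3*((qQ3 N Y Z Z Z) + (qQ3 N Z Y Z Z) + (qQ3 N Z Z Y Z) + (qQ3 N Z Z Z Y))) + lt/(4*(N:ℝ)^((3:ℝ)/2))*((qQ4 N Y Z Z Z) + (qQ4 N Z Y Z Z) + (qQ4 N Z Z Y Z) + (qQ4 N Z Z Z Y))) * s ^ 3) := by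
    funext s
    rw [show (fun t : ℝ =>
        potV N l2 ld lp lt a1 a2 a3 (fun a b c => X a b c + t * Y a b c + s * Z a b c))
        = fun t : ℝ => ((l2/2*((qS N X X)) + ld/(4*(N:ℝ)^3)*((qS N X X)*(qS N X X)) + lp/(4*(N:ℝ)^2)*(a1*((qQ1 N X X X X)) + a2*((qQ2 N X X X X)) + a3*((qQ3 N X X X X))) + lt/(4*(N:ℝ)^((3:ℝ)/2))*((qQ4 N X X X X)))
      + (l2/2*((qS N X Z) + (qS N Z X)) + ld/(4*(N:ℝ)^3)*(2*(qS N X X)*(qS N X Z) + 2*(qS N X X)*(qS N Z X)) + lp/(4*(N:ℝ)^2)*(a1*((qQ1 N X X X Z) + (qQ1 N X X Z X) + (qQ1 N X Z X X) + (qQ1 N Z X X X)) + a2*((qQ2 N X X X Z) + (qQ2 N X X Z X) + (qQ2 N X Z X X) + (qQ2 N Z X X X)) + a3*((qQ3 N X X X Z) + (qQ3 N X X Z X) + (qQ3 N X Z X X) + (qQ3 N Z X X X))) + lt/(4*(N:ℝ)^((3:ℝ)/2))*((qQ4 N X X X Z) + (qQ4 N X X Z X) + (qQ4 N X Z X X)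 + (qQ4 N Z X X X))) * s
      + (l2/2*((qS N Z Z)) + ld/(4*(N:ℝ)^3)*(2*(qS N X X)*(qS N Z Z) + (qS N X Z)*(qS N X Z) + 2*(qS N X Z)*(qS N Z X) + (qS N Z X)*(qS N Z X)) + lp/(4*(N:ℝ)^2)*(a1*((qQ1 N X X Z Z) + (qQ1 N X Z X Z) + (qQ1 N X Z Z X) + (qQ1 N Z X X Z) + (qQ1 N Z X Z X) + (qQ1 N Z Z X X)) + a2*((qQ2 N X X Z Z) + (qQ2 N X Z X Z) + (qQ2 N X Z Z X) + (qQ2 N Z X X Z) + (qQ2 N Z X Z X) + (qQ2 N Z Z X X)) + a3*((qQ3 N X X Z Z) + (qQ3 N X Z X Z) + (qQ3 N X Z Z X) + (qQ3 N Z X X Z) + (qQ3 N Z X Z X) + (qQ3 N Z Z X X))) + lt/(4*(N:ℝ)^((3:ℝ)/2))*((qQ4 N X X Z Z) + (qQ4 N X Z X Z) + (qQ4 N X Z Z X) + (qQ4 N Z X X Z) + (qQ4 N Z X Z X) + (qQ4 N Z Z X X))) * s ^ 2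
      + (ld/(4*(N:ℝ)^3)*(2*(qS N X Z)*(qS N Z Z) + 2*(qS N Z X)*(qS N Z Z)) + lp/(4*(N:ℝ)^2)*(a1*((qQ1 N X Z Z Z) + (qQ1 N Z X Z Z) + (qQ1 N Z Z X Z) + (qQ1 N Z Z Z X)) + a2*((qQ2 N X Z Z Z) + (qQ2 N Z X Z Z) + (qQ2 N Z Z X Z) + (qQ2 N Z Z Z X)) + a3*((qQ3 N X Z Z Z) + (qQ3 N Z X Z Z) + (qQ3 N Z Z X Z) + (qQ3 N Z Z Z X))) + lt/(4*(N:ℝ)^((3:ℝ)/2))*((qQ4 N X Z Z Z) + (qQ4 N Z X Z Z) + (qQ4 N Z Z X Z) + (qQ4 N Z Z Z X))) * s ^ 3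
      + (ld/(4*(N:ℝ)^3)*((qS N Z Z)*(qS N Z Z)) + lp/(4*(N:ℝ)^2)*(a1*((qQ1 N Z Z Z Z)) + a2*((qQ2 N Z Z Z Z)) + a3*((qQ3 N Z Z Z Z))) + lt/(4*(N:ℝ)^((3:ℝ)/2))*((qQ4 N Z Z Z Z))) * s ^ 4)
    + ((l2/2*((qS N X Y) + (qS N Y X)) + ld/(4*(N:ℝ)^3)*(2*(qS N X X)*(qS N X Y) + 2*(qS N X X)*(qS N Y X)) + lp/(4*(N:ℝ)^2)*(a1*((qQ1 N X X X Y) + (qQ1 N X X Y X) + (qQ1 N X Y X X) + (qQ1 N Y X X X)) + a2*((qQ2 N X X X Y) + (qQ2 N X X Y X) + (qQ2 N X Y X X) + (qQ2 N Y X X X)) + a3*((qQ3 N X X X Y) + (qQ3 N X X Y X) + (qQ3 N X Y X X) + (qQ3 N Y X X X))) + lt/(4*(N:ℝ)^((3:ℝ)/2))*((qQ4 N X X X Y) + (qQ4 N X X Y X) + (qQ4 N X Y X X) + (qQ4 N Y X X X)))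
      + (l2/2*((qS N Y Z) + (qS N Z Y)) + ld/(4*(N:ℝ)^3)*(2*(qS N X X)*(qS N Y Z) + 2*(qS N X X)*(qS N Z Y) + 2*(qS N X Y)*(qS N X Z) + 2*(qS N X Y)*(qS N Z X) + 2*(qS N X Z)*(qS N Y X) + 2*(qS N Y X)*(qS N Z X)) + lp/(4*(N:ℝ)^2)*(a1*((qQ1 N X X Y Z) + (qQ1 N X X Z Y) + (qQ1 N X Y X Z) + (qQ1 N X Y Z X) + (qQ1 N X Z X Y) + (qQ1 N X Z Y X) + (qQ1 N Y X X Z) + (qQ1 N Y X Z X) + (qQ1 N Y Z X X) + (qQ1 N Z X X Y) + (qQ1 N Z X Y X) + (qQ1 N Z Y X X)) + a2*((qQ2 N X X Y Z) + (qQ2 N X X Z Y) + (qQ2 N X Y X Z) + (qQ2 N X Y Z X) + (qQ2 N X Z X Y) + (qQ2 N X Z Y X) + (qQ2 N Y X X Z) + (qQ2 N Y X Z X) + (qQ2 N Y Z X X) + (qQ2 N Z X X Y) + (qQ2 N Z X Y X) + (qQ2 N Z Y X X)) + a3*((qQ3 N X X Y Z) + (qQ3 N X X Z Y) + (qQ3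 N X Y X Z) + (qQ3 N X Y Z X) + (qQ3 N X Z X Y) + (qQ3 N X Z Y X) + (qQ3 N Y X X Z) + (qQ3 N Y X Z X) + (qQ3 N Y Z X X) + (qQ3 N Z X X Y) + (qQ3 N Z X Y X) + (qQ3 N Z Y X X))) + lt/(4*(N:ℝ)^((3:ℝ)/2))*((qQ4 N X X Y Z) + (qQ4 N X X Z Y) + (qQ4 N X Y X Z) + (qQ4 N X Y Z X) + (qQ4 N X Z X Y) + (qQ4 N X Z Y X) + (qQ4 N Y X X Z) + (qQ4 N Y X Z X) + (qQ4 N Y Z X X) + (qQ4 N Z X X Y) + (qQ4 N Z X Y X) + (qQ4 N Z Y X X))) * s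
      + (ld/(4*(N:ℝ)^3)*(2*(qS N X Y)*(qS N Z Z) + 2*(qS N X Z)*(qS N Y Z) + 2*(qS N X Z)*(qS N Z Y) + 2*(qS N Y X)*(qS N Z Z) + 2*(qS N Y Z)*(qS N Z X) + 2*(qS N Z X)*(qS N Z Y)) + lp/(4*(N:ℝ)^2)*(a1*((qQ1 N X Y Z Z) + (qQ1 N X Z Y Z) + (qQ1 N X Z Z Y) + (qQ1 N Y X Z Z) + (qQ1 N Y Z X Z) + (qQ1 N Y Z Z X) + (qQ1 N Z X Y Z) + (qQ1 N Z X Z Y) + (qQ1 N Z Y X Z) + (qQ1 N Z Y Z X) + (qQ1 N Z Z X Y) + (qQ1 N Z Z Y X)) + a2*((qQ2 N X Y Z Z) + (qQ2 N X Z Y Z) + (qQ2 N X Z Z Y) + (qQ2 N Y X Z Z) + (qQ2 N Y Z X Z) + (qQ2 N Y Z Z X) + (qQ2 N Z X Y Z) + (qQ2 N Z X Z Y) + (qQ2 N Z Y X Z) + (qQ2 N Z Y Z X) + (qQ2 N Z Z X Y) + (qQ2 N Z Z Y X)) + a3*((qQ3 N X Y Z Z) + (qQ3 N X Z Y Z)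 + (qQ3 N X Z Z Y) + (qQ3 N Y X Z Z) + (qQ3 N Y Z X Z) + (qQ3 N Y Z Z X) + (qQ3 N Z X Y Z) + (qQ3 N Z X Z Y) + (qQ3 N Z Y X Z) + (qQ3 N Z Y Z X) + (qQ3 N Z Z X Y) + (qQ3 N Z Z Y X))) + lt/(4*(N:ℝ)^((3:ℝ)/2))*((qQ4 N X Y Z Z) + (qQ4 N X Z Y Z) + (qQ4 N X Z Z Y) + (qQ4 N Y X Z Z) + (qQ4 N Y Z X Z) + (qQ4 N Y Z Z X) + (qQ4 N Z X Y Z) + (qQ4 N Z X Z Y) + (qQ4 N Z Y X Z) + (qQ4 N Z Y Z X) + (qQ4 N Z Z X Y) + (qQ4 N Z Z Y X))) * s ^ 2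
      + (ld/(4*(N:ℝ)^3)*(2*(qS N Y Z)*(qS N Z Z) + 2*(qS N Z Y)*(qS N Z Z)) + lp/(4*(N:ℝ)^2)*(a1*((qQ1 N Y Z Z Z) + (qQ1 N Z Y Z Z) + (qQ1 N Z Z Y Z) + (qQ1 N Z Z Z Y)) + a2*((qQ2 N Y Z Z Z) + (qQ2 N Z Y Z Z) + (qQ2 N Z Z Y Z) + (qQ2 N Z Z Z Y)) + a3*((qQ3 N Y Z Z Z) + (qQ3 N Z Y Z Z) + (qQ3 N Z Z Y Z) + (qQ3 N Z Z Z Y))) + lt/(4*(N:ℝ)^((3:ℝ)/2))*((qQ4 N Y Z Z Z) + (qQ4 N Z Y Z Z) + (qQ4 N Z Z Y Z) + (qQ4 N Z Z Z Y))) * s ^ 3) * t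
    + ((l2/2*((qS N Y Y)) + ld/(4*(N:ℝ)^3)*(2*(qS N X X)*(qS N Y Y) + (qS N X Y)*(qS N X Y) + 2*(qS N X Y)*(qS N Y X) + (qS N Y X)*(qS N Y X)) + lp/(4*(N:ℝ)^2)*(a1*((qQ1 N X X Y Y) + (qQ1 N X Y X Y) + (qQ1 N X Y Y X) + (qQ1 N Y X X Y) + (qQ1 N Y X Y X) + (qQ1 N Y Y X X)) + a2*((qQ2 N X X Y Y) + (qQ2 N X Y X Y) + (qQ2 N X Y Y X) + (qQ2 N Y X X Y) + (qQ2 N Y X Y X) + (qQ2 N Y Y X X)) + a3*((qQ3 N X X Y Y) + (qQ3 N X Y X Y) + (qQ3 N X Y Y X) + (qQ3 N Y X X Y) + (qQ3 N Y X Y X) + (qQ3 N Y Y X X))) + lt/(4*(N:ℝ)^((3:ℝ)/2))*((qQ4 N X X Y Y) + (qQ4 N X Y X Y) + (qQ4 N X Y Y X) + (qQ4 N Y X X Y) + (qQ4 N Y X Y X) + (qQ4 N Y Y X X)))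
      + (ld/(4*(N:ℝ)^3)*(2*(qS N X Y)*(qS N Y Z) + 2*(qS N X Y)*(qS N Z Y) + 2*(qS N X Z)*(qS N Y Y) + 2*(qS N Y X)*(qS N Y Z) + 2*(qS N Y X)*(qS N Z Y) + 2*(qS N Y Y)*(qS N Z X)) + lp/(4*(N:ℝ)^2)*(a1*((qQ1 N X Y Y Z) + (qQ1 N X Y Z Y) + (qQ1 N X Z Y Y) + (qQ1 N Y X Y Z) + (qQ1 N Y X Z Y) + (qQ1 N Y Y X Z) + (qQ1 N Y Y Z X) + (qQ1 N Y Z X Y) + (qQ1 N Y Z Y X) + (qQ1 N Z X Y Y) + (qQ1 N Z Y X Y) + (qQ1 N Z Y Y X)) + a2*((qQ2 N X Y Y Z) + (qQ2 N X Y Z Y) + (qQ2 N X Z Y Y) + (qQ2 N Y X Y Z) + (qQ2 N Y X Z Y) + (qQ2 N Y Y X Z) + (qQ2 N Y Y Z X) + (qQ2 N Y Z X Y) + (qQ2 N Y Z Y X) + (qQ2 N Z X Y Y) + (qQ2 N Z Y X Y) + (qQ2 N Z Y Y X)) + a3*((qQ3 N X Y Y Z) + (qQ3 N X Y Z Y)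 + (qQ3 N X Z Y Y) + (qQ3 N Y X Y Z) + (qQ3 N Y X Z Y) + (qQ3 N Y Y X Z) + (qQ3 N Y Y Z X) + (qQ3 N Y Z X Y) + (qQ3 N Y Z Y X) + (qQ3 N Z X Y Y) + (qQ3 N Z Y X Y) + (qQ3 N Z Y Y X))) + lt/(4*(N:ℝ)^((3:ℝ)/2))*((qQ4 N X Y Y Z) + (qQ4 N X Y Z Y) + (qQ4 N X Z Y Y) + (qQ4 N Y X Y Z) + (qQ4 N Y X Z Y) + (qQ4 N Y Y X Z) + (qQ4 N Y Y Z X) + (qQ4 N Y Z X Y) + (qQ4 N Y Z Y X) + (qQ4 N Z X Y Y) + (qQ4 N Z Y X Y) + (qQ4 N Z Y Y X))) * s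
      + (ld/(4*(N:ℝ)^3)*(2*(qS N Y Y)*(qS N Z Z) + (qS N Y Z)*(qS N Y Z) + 2*(qS N Y Z)*(qS N Z Y) + (qS N Z Y)*(qS N Z Y)) + lp/(4*(N:ℝ)^2)*(a1*((qQ1 N Y Y Z Z) + (qQ1 N Y Z Y Z) + (qQ1 N Y Z Z Y) + (qQ1 N Z Y Y Z) + (qQ1 N Z Y Z Y) + (qQ1 N Z Z Y Y)) + a2*((qQ2 N Y Y Z Z) + (qQ2 N Y Z Y Z) + (qQ2 N Y Z Z Y) + (qQ2 N Z Y Y Z) + (qQ2 N Z Y Z Y) + (qQ2 N Z Z Y Y)) + a3*((qQ3 N Y Y Z Z) + (qQ3 N Y Z Y Z) + (qQ3 N Y Z Z Y) + (qQ3 N Z Y Y Z) + (qQ3 N Z Y Z Y) + (qQ3 N Z Z Y Y))) + lt/(4*(N:ℝ)^((3:ℝ)/2))*((qQ4 N Y Y Z Z) + (qQ4 N Y Z Y Z) + (qQ4 N Y Z Z Y) + (qQ4 N Z Y Y Z) + (qQ4 N Z Y Z Y) + (qQ4 N Z Z Y Y))) * s ^ 2) * t ^ 2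
    + ((ld/(4*(N:ℝ)^3)*(2*(qS N X Y)*(qS N Y Y) + 2*(qS N Y X)*(qS N Y Y)) + lp/(4*(N:ℝ)^2)*(a1*((qQ1 N X Y Y Y) + (qQ1 N Y X Y Y) + (qQ1 N Y Y X Y) + (qQ1 N Y Y Y X)) + a2*((qQ2 N X Y Y Y) + (qQ2 N Y X Y Y) + (qQ2 N Y Y X Y) + (qQ2 N Y Y Y X)) + a3*((qQ3 N X Y Y Y) + (qQ3 N Y X Y Y) + (qQ3 N Y Y X Y) + (qQ3 N Y Y Y X))) + lt/(4*(N:ℝ)^((3:ℝ)/2))*((qQ4 N X Y Y Y) + (qQ4 N Y X Y Y) + (qQ4 N Y Y X Y) + (qQ4 N Y Y Y X)))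
      + (ld/(4*(N:ℝ)^3)*(2*(qS N Y Y)*(qS N Y Z) + 2*(qS N Y Y)*(qS N Z Y)) + lp/(4*(N:ℝ)^2)*(a1*((qQ1 N Y Y Y Z) + (qQ1 N Y Y Z Y) + (qQ1 N Y Z Y Y) + (qQ1 N Z Y Y Y)) + a2*((qQ2 N Y Y Y Z) + (qQ2 N Y Y Z Y) + (qQ2 N Y Z Y Y) + (qQ2 N Z Y Y Y)) + a3*((qQ3 N Y Y Y Z) + (qQ3 N Y Y Z Y) + (qQ3 N Y Z Y Y) + (qQ3 N Z Y Y Y))) + lt/(4*(N:ℝ)^((3:ℝ)/2))*((qQ4 N Y Y Y Z) + (qQ4 N Y Y Z Y) + (qQ4 N Y Z Y Y) + (qQ4 N Z Y Y Y))) * s) * t ^ 3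
    + ((ld/(4*(N:ℝ)^3)*((qS N Y Y)*(qS N Y Y)) + lp/(4*(N:ℝ)^2)*(a1*((qQ1 N Y Y Y Y)) + a2*((qQ2 N Y Y Y Y)) + a3*((qQ3 N Y Y Y Y))) + lt/(4*(N:ℝ)^((3:ℝ)/2))*((qQ4 N Y Y Y Y)))) * t ^ 4 from funext fun t => potV_expand N l2 ld lp lt a1 a2 a3 X Y Z s t]
    exact deriv_poly4 _ _ _ _ _
  rw [h1]
  exact deriv_poly3 _ _ _ _

/-- Eigenvalue of the Hessian at a rank-one solution on the triply-orthogonal direction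
`u'⊗v'⊗w'`. -/
theorem rank_one_hessian_triple_orthogonal (N : ℕ) (hN : 1 ≤ N)
    (l2 ld lp lt a1 a2 a3 : ℝ)
    (u v w : Fin N → ℝ)
    (φ : Fin N → Fin N → Fin N → ℝ) (hφ : φ = fun a b c => u a * v b * w c)
    (D : ℝ)
    (hD : D = ld + lp * (N : ℝ) * (a1 + a2 + a3) + lt * (N : ℝ) ^ ((3 : ℝ) / 2))
    (hD0 : D ≠ 0)
    (hsol : (∑ a, (u a) ^ 2) * (∑ b, (v b) ^ 2) * (∑ c, (w c) ^ 2)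
      = -l2 * (N : ℝ) ^ 3 / D) :
    ∀ u' v' w' : Fin N → ℝ,
      (∑ a, u' a * u a) = 0 → (∑ b, v' b * v b) = 0 → (∑ c, w' c * w c) = 0 →
      hessApply N l2 ld lp lt a1 a2 a3 φ (fun a b c => u' a * v' b * w' c)
        = fun a b c =>
          l2 * (lp * (N : ℝ) * (a1 + a2 + a3) + lt * (N : ℝ) ^ ((3 : ℝ) / 2)) / D *
            (u' a * v' b * w' c) := by
  subst hφ
  intro u' v' w' hu hv hw
  funext a b c
  simp only [hessApply]
  refine Eq.trans (hess_eval N l2 ld lp lt a1 a2 a3 (fun a b c => u a * v b * w c)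
    (fun a b c => u' a * v' b * w' c)
    (fun a' b' c' => if a' = a ∧ b' = b ∧ c' = c then (1 : ℝ) else 0)) ?_
  rw [show (fun a' b' c' => if a' = a ∧ b' = b ∧ c' = c then (1 : ℝ) else 0)
      = fun a' b' c' => dlt a a' * dlt b b' * dlt c c' from
    funext fun a' => funext fun b' => funext fun c' => ite_dlt a b c a' b' c']
  simp only [qS_rank1, qQ1_rank1, qQ2_rank1, qQ3_rank1, qQ4_rank1]
  have hu1 : qip u' u = 0 := hu
  have hv1 : qip v' v = 0 := hv
  have hw1 : qip w' w = 0 := hw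
  have hu2 : qip u u' = 0 := by
    rw [qip, Finset.sum_congr rfl (fun i _ => mul_comm (u i) (u' i))]; exact hu
  have hv2 : qip v v' = 0 := by
    rw [qip, Finset.sum_congr rfl (fun i _ => mul_comm (v i) (v' i))]; exact hv
  have hw2 : qip w w' = 0 := by
    rw [qip, Finset.sum_congr rfl (fun i _ => mul_comm (w i) (w' i))]; exact hw
  simp only [qip_dlt, dlt_qip, hu1, hv1, hw1, hu2, hv2, hw2, mul_zero, zero_mul,
    add_zero, zero_add, mul_one, one_mul]
  have hqu : qip u u = ∑ i, u i ^ 2 := Finset.sum_congr rfl fun i _ => (pow_two (u i)).symm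
  have hqv : qip v v = ∑ i, v i ^ 2 := Finset.sum_congr rfl fun i _ => (pow_two (v i)).symm
  have hqw : qip w w = ∑ i, w i ^ 2 := Finset.sum_congr rfl fun i _ => (pow_two (w i)).symm
  rw [hqu, hqv, hqw]
  have hsol' : (∑ a, (u a) ^ 2) * (∑ b, (v b) ^ 2) * (∑ c, (w c) ^ 2) * D = -l2 * (N : ℝ) ^ 3 :=
    (eq_div_iff hD0).mp hsol
  have hN1 : (1:ℝ) ≤ (N:ℝ) := by exact_mod_cast hN
  have hNne : (N:ℝ) ≠ 0 := by linarith
  rw [div_mul_eq_mul_div (l2 * _) D, eq_div_iff hD0]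
  have hsol'' : (∑ a, (u a) ^ 2) * (∑ b, (v b) ^ 2) * (∑ c, (w c) ^ 2) * D / (N : ℝ) ^ 3 = -l2 := by
    rw [hsol']; field_simp
  linear_combination (ld * (u' a * v' b * w' c)) * hsol'' + (l2 * (u' a * v' b * w' c)) * hD
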